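/- With T, a, b, a_0, b_0, s and σ_{a,b} as follows — a_0, b_0 are new symbols with the edge colors of a and b respectively, s(a_0) = (1,0), s(b_0) = (−1,0), s(t) = (0,0) for t ∈ T, and σ_{a,b} is the two-dimensional substitution on A = T ∪ {a_0,b_0} with base rule t ↦ {[(0,0),t]} and rules (t,t',(1,0)) ↦ (2,0) + s(t') − s(t) for every horizontally matching pair (t,t') ∈ A² except (a_0,b_0), and (t,t',(0,1)) ↦ (0,1) + s(t') − s(t) for every vertically matching pair (t,t') ∈ A² — the substitution σ_{a,b} is overlapping if and only if T admits a valid tiling of a cycle in which some two consecutive tiles are copies of a and b with the copy of b placed at the position immediately to the right of the copy of a. -/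

import Mathlib

open scoped Classical

/-- A combinatorial substitution on alphabet `A` with vectors in `V`:
a base rule sending each letter to a pattern, together with a deterministic
finite set of concatenation rules.  `rule t t' u = some v` encodes the
concatenation rule `(t, t', u) ↦ v`. -/
structure Subst (A : Type*) (V : Type*) [AddCommGroup V] where
  /-- the base rule -/
  base : A → Finset (V × A)
  /-- the image of a letter is a pattern: its cells have distinct vectors -/
  basePat : ∀ t : A, ∀ c ∈ base t, ∀ c' ∈ base t, c.1 = c'.1 → c = c'
  /-- the concatenation rules, as a partial function -/
  rule : A → A → V → Option V
  /-- there are finitely many concatenation rules -/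
  finiteRules : {u : V | ∃ t t', rule t t' u ≠ none}.Finite
  /-- determinism: no two rules with left-hand sides `(t,t',u)` and `(t,t',-u)` -/
  det : ∀ t t' u, (rule t t' u).isSome → (rule t t' (-u)).isSome → u = -u

/-- A pattern is a finite set of cells with pairwise distinct vectors. -/
def IsPattern {V A : Type*} (P : Finset (V × A)) : Prop :=
  ∀ c ∈ P, ∀ c' ∈ P, c.1 = c'.1 → c = c'

namespace Subst

variable {A V : Type*} [AddCommGroup V]

/-- `σ_rule(c, c')`: the relative position of the images of the two cells
`c`, `c'`, when some concatenation rule applies to them. -/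
def ruleVec (σ : Subst A V) (c c' : V × A) : Option V :=
  match σ.rule c.2 c'.2 (c'.1 - c.1) with
  | some v => some v
  | none => (σ.rule c'.2 c.2 (c.1 - c'.1)).map (fun v => -v)

/-- The image vector `ω_σ(γ)` of a path `γ`. -/
def omega (σ : Subst A V) (γ : List (V × A)) : V :=
  ((γ.zip γ.tail).map (fun p => (σ.ruleVec p.1 p.2).getD 0)).sum

/-- A `C_σ`-path: a nonempty sequence of cells in which any two consecutive
cells form a translated copy of a starting pattern of `σ`, and any two cells
with the same vector are equal. -/
def IsPath (σ : Subst A V) (γ : List (V × A)) : Prop :=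
  γ ≠ [] ∧ γ.Chain' (fun c c' => (σ.ruleVec c c').isSome) ∧
    ∀ c ∈ γ, ∀ c' ∈ γ, c.1 = c'.1 → c = c'

/-- A `C_σ`-path of the pattern `P`. -/
def IsPathOf (σ : Subst A V) (P : Finset (V × A)) (γ : List (V × A)) : Prop :=
  σ.IsPath γ ∧ ∀ c ∈ γ, c ∈ P

/-- A `C_σ`-loop of the pattern `P`. -/
def IsLoopOf (σ : Subst A V) (P : Finset (V × A)) (γ : List (V × A)) : Prop :=
  σ.IsPathOf P γ ∧ γ.head? = γ.getLast?

/-- `P` is `C_σ`-covered: any two of its cells are joined by a `C_σ`-path of `P`. -/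
def Covered (σ : Subst A V) (P : Finset (V × A)) : Prop :=
  ∀ c ∈ P, ∀ c' ∈ P,
    ∃ γ, σ.IsPathOf P γ ∧ γ.head? = some c ∧ γ.getLast? = some c'

/-- `σ` is consistent on `P`: any two `C_σ`-paths of `P` with the same first
and last cells have the same image vector. -/
def ConsistentOn (σ : Subst A V) (P : Finset (V × A)) : Prop :=
  ∀ γ γ' : List (V × A), σ.IsPathOf P γ → σ.IsPathOf P γ' →
    γ.head? = γ'.head? → γ.getLast? = γ'.getLast? → σ.omega γ = σ.omega γ'

/-- `σ` is consistent: it is consistent on every `C_σ`-covered pattern. -/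
def Consistent (σ : Subst A V) : Prop :=
  ∀ P : Finset (V × A), IsPattern P → σ.Covered P → σ.ConsistentOn P

/-- The support of the image of a letter. -/
noncomputable def supp (σ : Subst A V) (t : A) : Finset V :=
  (σ.base t).image Prod.fst

/-- `σ` is non-overlapping on `P`: the images of two distinct cells of `P`
joined by a `C_σ`-path of `P` have disjoint supports. -/
def NonOverlappingOn (σ : Subst A V) (P : Finset (V × A)) : Prop :=
  ∀ c ∈ P, ∀ c' ∈ P, c ≠ c' → ∀ γ, σ.IsPathOf P γ →
    γ.head? = some c → γ.getLast? = some c' →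
    ∀ b ∈ σ.supp c'.2, σ.omega γ + b ∉ σ.supp c.2

/-- `σ` is non-overlapping: it is non-overlapping on every `C_σ`-covered pattern. -/
def NonOverlapping (σ : Subst A V) : Prop :=
  ∀ P : Finset (V × A), IsPattern P → σ.Covered P → σ.NonOverlappingOn P

end Subst

/-- A Wang tile: a unit square with a color on each of its four edges. -/
structure WangTile (C : Type*) where
  north : C
  south : C
  east : C
  west : C

/-- The alphabet `A = T ∪ {a₀, b₀}`: Wang tiles together with the two new
symbols `a₀` and `b₀`. -/
inductive LetterAB (C : Type*) : Type _ where
  | tile : WangTile C → LetterAB C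
  | a0 : LetterAB C
  | b0 : LetterAB C

/-- The Wang tile carried by a letter: `a₀` has the edge colors of `a` and
`b₀` has the edge colors of `b`. -/
def LetterAB.toTile {C : Type*} (a b : WangTile C) : LetterAB C → WangTile C
  | .tile t => t
  | .a0 => a
  | .b0 => b

/-- Membership of a letter in `A = T ∪ {a₀, b₀}`. -/
def LetterAB.inA {C : Type*} (T : Finset (WangTile C)) : LetterAB C → Prop
  | .tile t => t ∈ T
  | .a0 => True
  | .b0 => True

/-- The shift `s`: `s a₀ = (1,0)`, `s b₀ = (-1,0)`, `s t = (0,0)` otherwise. -/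
def sfun {C : Type*} : LetterAB C → ℤ × ℤ
  | .tile _ => (0, 0)
  | .a0 => (1, 0)
  | .b0 => (-1, 0)

/-- The substitution `σ_{a,b}`: horizontal rules
`(t, t', (1,0)) ↦ (2,0) + s t' - s t` for all horizontally matching pairs
except `(a₀, b₀)`, and vertical rules `(t, t', (0,1)) ↦ (0,1) + s t' - s t`
for all vertically matching pairs. -/
noncomputable def sigmaAB {C : Type*} (T : Finset (WangTile C))
    (a b : WangTile C) : Subst (LetterAB C) (ℤ × ℤ) where
  base t := {((0, 0), t)}
  basePat := by
    intro t c hc c' hc' _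
    rw [Finset.mem_singleton] at hc hc'
    rw [hc, hc']
  rule t t' u :=
    if u = ((1 : ℤ), (0 : ℤ)) ∧ LetterAB.inA T t ∧ LetterAB.inA T t' ∧
        (LetterAB.toTile a b t).east = (LetterAB.toTile a b t').west ∧
        ¬(t = LetterAB.a0 ∧ t' = LetterAB.b0)
    then some (((2 : ℤ), (0 : ℤ)) + sfun t' - sfun t)
    else if u = ((0 : ℤ), (1 : ℤ)) ∧ LetterAB.inA T t ∧ LetterAB.inA T t' ∧
        (LetterAB.toTile a b t).north = (LetterAB.toTile a b t').south
    then some (((0 : ℤ), (1 : ℤ)) + sfun t' - sfun t)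
    else none
  finiteRules := by
    apply Set.Finite.subset
      ((Set.finite_singleton ((0, 1) : ℤ × ℤ)).insert ((1, 0) : ℤ × ℤ))
    rintro u ⟨t, t', h⟩
    try simp only at h
    split_ifs at h with h1 h2
    · exact Set.mem_insert_iff.2 (Or.inl h1.1)
    · exact Set.mem_insert_iff.2 (Or.inr h2.1)
    · exact absurd rfl h
  det := by
    intro t t' u h1 h2
    exfalso
    try simp only at h1 h2
    have hu : u = ((1 : ℤ), (0 : ℤ)) ∨ u = ((0 : ℤ), (1 : ℤ)) := by
      split_ifs at h1 with hA hB
      · exact Or.inl hA.1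
      · exact Or.inr hB.1
      · simp at h1
    have hnu : -u = ((1 : ℤ), (0 : ℤ)) ∨ -u = ((0 : ℤ), (1 : ℤ)) := by
      split_ifs at h2 with hC hD
      · exact Or.inl hC.1
      · exact Or.inr hD.1
      · simp at h2
    rcases hu with rfl | rfl <;> rcases hnu with h | h <;> revert h <;> decide

/-- The colors of the Wang tiles `a` and `b` agree on the shared edge when
`b` is placed at position `u` relative to `a`. -/
def WangMatch {C : Type*} (a b : WangTile C) (u : ℤ × ℤ) : Prop :=
  (u = (1, 0) ∧ a.east = b.west) ∨ (u = (-1, 0) ∧ a.west = b.east) ∨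
  (u = (0, 1) ∧ a.north = b.south) ∨ (u = (0, -1) ∧ a.south = b.north)

/-- `T` admits a valid tiling of a cycle in which some two consecutive tiles
are copies of `a` and `b`, the copy of `b` placed immediately to the right
of the copy of `a`. -/
def AdmitsCycleWith {C : Type*} (T : Finset (WangTile C))
    (a b : WangTile C) : Prop :=
  ∃ (n : ℕ) (t : ℕ → WangTile C) (p : ℕ → ℤ × ℤ),
    5 ≤ n ∧ (∀ i < n, t i ∈ T) ∧
    (∀ i < n - 1, ∀ j < n - 1, p i = p j → i = j) ∧
    p (n - 1) = p 0 ∧ t (n - 1) = t 0 ∧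
    (∀ i < n - 1, WangMatch (t i) (t (i + 1)) (p (i + 1) - p i)) ∧
    ∃ i < n - 1, t i = a ∧ t (i + 1) = b ∧ p (i + 1) = p i + (1, 0)

section Exp
variable {C : Type*} (T : Finset (WangTile C)) (a b : WangTile C)

def HM (t t' : LetterAB C) : Prop :=
  LetterAB.inA T t ∧ LetterAB.inA T t' ∧
  (LetterAB.toTile a b t).east = (LetterAB.toTile a b t').west ∧
  ¬(t = LetterAB.a0 ∧ t' = LetterAB.b0)

def VM (t t' : LetterAB C) : Prop :=
  LetterAB.inA T t ∧ LetterAB.inA T t' ∧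
  (LetterAB.toTile a b t).north = (LetterAB.toTile a b t').south

lemma rule_def (t t' : LetterAB C) (u : ℤ × ℤ) :
    (sigmaAB T a b).rule t t' u =
      if u = ((1 : ℤ), (0 : ℤ)) ∧ HM T a b t t'
      then some (((2 : ℤ), (0 : ℤ)) + sfun t' - sfun t)
      else if u = ((0 : ℤ), (1 : ℤ)) ∧ VM T a b t t'
      then some (((0 : ℤ), (1 : ℤ)) + sfun t' - sfun t)
      else none := by
  unfold HM VM
  simp only [sigmaAB]
  congr

lemma ruleVec_of_some {A V : Type*} [AddCommGroup V] (σ : Subst A V) {x y : V × A} {v : V}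
    (h : σ.rule x.2 y.2 (y.1 - x.1) = some v) : σ.ruleVec x y = some v := by
  unfold Subst.ruleVec; rw [h]

lemma ruleVec_of_none {A V : Type*} [AddCommGroup V] (σ : Subst A V) {x y : V × A}
    (h : σ.rule x.2 y.2 (y.1 - x.1) = none) :
    σ.ruleVec x y = (σ.rule y.2 x.2 (x.1 - y.1)).map (fun v => -v) := by
  unfold Subst.ruleVec; rw [h]

lemma ruleVec_eq (x y : (ℤ × ℤ) × LetterAB C) :
    (sigmaAB T a b).ruleVec x y =
      if y.1 - x.1 = ((1 : ℤ), (0 : ℤ)) ∧ HM T a b x.2 y.2 then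
        some (((2 : ℤ), (0 : ℤ)) + sfun y.2 - sfun x.2)
      else if y.1 - x.1 = ((0 : ℤ), (1 : ℤ)) ∧ VM T a b x.2 y.2 then
        some (((0 : ℤ), (1 : ℤ)) + sfun y.2 - sfun x.2)
      else if x.1 - y.1 = ((1 : ℤ), (0 : ℤ)) ∧ HM T a b y.2 x.2 then
        some (-(((2 : ℤ), (0 : ℤ)) + sfun x.2 - sfun y.2))
      else if x.1 - y.1 = ((0 : ℤ), (1 : ℤ)) ∧ VM T a b y.2 x.2 then
        some (-(((0 : ℤ), (1 : ℤ)) + sfun x.2 - sfun y.2))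
      else none := by
  by_cases hA : y.1 - x.1 = ((1 : ℤ), (0 : ℤ)) ∧ HM T a b x.2 y.2
  · rw [if_pos hA]
    exact ruleVec_of_some _ (by rw [rule_def, if_pos hA])
  · rw [if_neg hA]
    by_cases hB : y.1 - x.1 = ((0 : ℤ), (1 : ℤ)) ∧ VM T a b x.2 y.2
    · rw [if_pos hB]
      exact ruleVec_of_some _ (by rw [rule_def, if_neg hA, if_pos hB])
    · rw [if_neg hB]
      rw [ruleVec_of_none _ (by rw [rule_def, if_neg hA, if_neg hB]), rule_def]
      by_cases hC : x.1 - y.1 = ((1 : ℤ), (0 : ℤ)) ∧ HM T a b y.2 x.2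
      · rw [if_pos hC, if_pos hC]; rfl
      · rw [if_neg hC, if_neg hC]
        by_cases hD : x.1 - y.1 = ((0 : ℤ), (1 : ℤ)) ∧ VM T a b y.2 x.2
        · rw [if_pos hD, if_pos hD]; rfl
        · rw [if_neg hD, if_neg hD]; rfl

lemma sfun_snd {C : Type*} (t : LetterAB C) : (sfun t).2 = 0 := by
  cases t <;> rfl

/-- potential function -/
def gfun {C : Type*} (c : (ℤ × ℤ) × LetterAB C) : ℤ × ℤ :=
  (2 * c.1.1 + (sfun c.2).1, c.1.2)

lemma ruleVec_isSome_iff (x y : (ℤ × ℤ) × LetterAB C) :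
    ((sigmaAB T a b).ruleVec x y).isSome ↔
      (y.1 - x.1 = ((1 : ℤ), (0 : ℤ)) ∧ HM T a b x.2 y.2) ∨
      (y.1 - x.1 = ((0 : ℤ), (1 : ℤ)) ∧ VM T a b x.2 y.2) ∨
      (x.1 - y.1 = ((1 : ℤ), (0 : ℤ)) ∧ HM T a b y.2 x.2) ∨
      (x.1 - y.1 = ((0 : ℤ), (1 : ℤ)) ∧ VM T a b y.2 x.2) := by
  rw [ruleVec_eq] ; split_ifs with h1 h2 h3 h4 <;> simp_all

lemma ruleVec_getD (x y : (ℤ × ℤ) × LetterAB C)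
    (h : ((sigmaAB T a b).ruleVec x y).isSome) :
    ((sigmaAB T a b).ruleVec x y).getD 0 = gfun y - gfun x := by
  have h2 := (ruleVec_isSome_iff T a b x y).mp h
  rw [ruleVec_eq]
  obtain ⟨⟨x1, x2⟩, xt⟩ := x
  obtain ⟨⟨y1, y2⟩, yt⟩ := y
  have s1 := sfun_snd (C := C) xt
  have s2 := sfun_snd (C := C) yt
  split_ifs with h1 h2 h3 h4 <;>
    simp only [Option.getD_some, Option.getD_none, gfun, Prod.mk_sub_mk, Prod.ext_iff,
      Prod.fst_sub, Prod.snd_sub, Prod.fst_add, Prod.snd_add, Prod.fst_neg, Prod.snd_neg] at * <;>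
    [skip; skip; skip; skip; tauto] <;> constructor <;> omega

lemma ruleVec_symm_isSome {A V : Type*} [AddCommGroup V] (σ : Subst A V)
    {x y : V × A} (h : (σ.ruleVec x y).isSome) : (σ.ruleVec y x).isSome := by
  unfold Subst.ruleVec at *
  cases h1 : σ.rule x.2 y.2 (y.1 - x.1) <;> cases h2 : σ.rule y.2 x.2 (x.1 - y.1) <;>
    simp [h1, h2] at h ⊢

lemma ruleVec_self_not_isSome (x : (ℤ × ℤ) × LetterAB C) :
    ¬ ((sigmaAB T a b).ruleVec x x).isSome := by
  rw [ruleVec_isSome_iff]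
  simp [Prod.ext_iff, sub_self]

lemma inA_of_isSome {x y : (ℤ × ℤ) × LetterAB C}
    (h : ((sigmaAB T a b).ruleVec x y).isSome) :
    LetterAB.inA T x.2 ∧ LetterAB.inA T y.2 := by
  rw [ruleVec_isSome_iff] at h
  unfold HM VM at h
  tauto

lemma step_of_isSome {x y : (ℤ × ℤ) × LetterAB C}
    (h : ((sigmaAB T a b).ruleVec x y).isSome) :
    y.1 - x.1 = ((1 : ℤ), 0) ∨ y.1 - x.1 = ((-1 : ℤ), 0) ∨
    y.1 - x.1 = ((0 : ℤ), 1) ∨ y.1 - x.1 = ((0 : ℤ), -1) := by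
  rw [ruleVec_isSome_iff] at h
  obtain ⟨⟨x1, x2⟩, xt⟩ := x
  obtain ⟨⟨y1, y2⟩, yt⟩ := y
  simp only [Prod.mk_sub_mk, Prod.ext_iff] at h ⊢
  omega

lemma wang_of_isSome {x y : (ℤ × ℤ) × LetterAB C}
    (h : ((sigmaAB T a b).ruleVec x y).isSome) :
    WangMatch (LetterAB.toTile a b x.2) (LetterAB.toTile a b y.2) (y.1 - x.1) := by
  rw [ruleVec_isSome_iff] at h
  unfold HM VM at h
  unfold WangMatch
  obtain ⟨⟨x1, x2⟩, xt⟩ := x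
  obtain ⟨⟨y1, y2⟩, yt⟩ := y
  simp only [Prod.mk_sub_mk, Prod.ext_iff] at h ⊢
  rcases h with ⟨h, h'⟩ | ⟨h, h'⟩ | ⟨h, h'⟩ | ⟨h, h'⟩
  · exact Or.inl ⟨⟨by omega, by omega⟩, h'.2.2.1⟩
  · exact Or.inr (Or.inr (Or.inl ⟨⟨by omega, by omega⟩, h'.2.2⟩))
  · exact Or.inr (Or.inl ⟨⟨by omega, by omega⟩, h'.2.2.1.symm⟩)
  · exact Or.inr (Or.inr (Or.inr ⟨⟨by omega, by omega⟩, h'.2.2.symm⟩))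

lemma omega_nil {A V : Type*} [AddCommGroup V] (σ : Subst A V) : σ.omega [] = 0 := rfl

lemma omega_singleton {A V : Type*} [AddCommGroup V] (σ : Subst A V) (x : V × A) :
    σ.omega [x] = 0 := rfl

lemma omega_cons_cons {A V : Type*} [AddCommGroup V] (σ : Subst A V) (x y : V × A)
    (l : List (V × A)) :
    σ.omega (x :: y :: l) = (σ.ruleVec x y).getD 0 + σ.omega (y :: l) := by
  show (((x :: y :: l).zip (y :: l)).map _).sum = _
  rw [List.zip_cons_cons, List.map_cons, List.sum_cons]
  rfl

/-- telescoping of `omega` along a chain for `sigmaAB` -/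
lemma omega_telescope :
    ∀ (l : List ((ℤ × ℤ) × LetterAB C)) (x y : (ℤ × ℤ) × LetterAB C),
      l.Chain' (fun c c' => ((sigmaAB T a b).ruleVec c c').isSome) →
      l.head? = some x → l.getLast? = some y →
      (sigmaAB T a b).omega l = gfun y - gfun x := by
  intro l
  induction l with
  | nil => intro x y _ h; simp at h
  | cons z l ih =>
    intro x y hch hh hl
    have hx : z = x := by simpa using hh
    subst hx
    match l with
    | [] =>
      have : y = z := by simpa using hl.symm
      subst this
      simp [omega_singleton]
    | w :: l' =>
      rw [List.Chain', List.isChain_cons_cons] at hch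
      have h1 : ((sigmaAB T a b).ruleVec z w).isSome := hch.1
      have := ih w y hch.2 rfl (by simpa using hl)
      rw [omega_cons_cons, this, ruleVec_getD T a b _ _ h1]
      abel

lemma supp_eq (t : LetterAB C) : (sigmaAB T a b).supp t = {((0 : ℤ), (0 : ℤ))} := by
  simp [Subst.supp, sigmaAB]

lemma all_of_chain' {α : Type*} {S : α → α → Prop} {Q : α → Prop}
    (hS : ∀ x y, S x y → Q x ∧ Q y) :
    ∀ l : List α, l.Chain' S → 2 ≤ l.length → ∀ x ∈ l, Q x := by
  intro l
  induction l with
  | nil => simp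
  | cons z l ih =>
    intro hch hlen x hx
    match l with
    | [] => simp at hlen
    | w :: l' =>
      rw [List.Chain', List.isChain_cons_cons] at hch
      rcases List.mem_cons.mp hx with rfl | hx'
      · exact (hS _ _ hch.1).1
      · match l' with
        | [] =>
          have hxw : x = w := by simpa using hx'
          exact hxw ▸ (hS _ _ hch.1).2
        | u :: l'' => exact ih hch.2 (by simp) x hx'

/-- the auxiliary graph on cells of a pattern -/
def GP (P : Finset ((ℤ × ℤ) × LetterAB C)) : SimpleGraph ((ℤ × ℤ) × LetterAB C) where
  Adj x y := x ≠ y ∧ x ∈ P ∧ y ∈ P ∧ ((sigmaAB T a b).ruleVec x y).isSome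
  symm := by
    constructor
    rintro x y ⟨h1, h2, h3, h4⟩
    exact ⟨h1.symm, h3, h2, ruleVec_symm_isSome _ h4⟩
  loopless := ⟨fun x h => h.1 rfl⟩

lemma walk_of_chain (P : Finset ((ℤ × ℤ) × LetterAB C)) :
    ∀ l : List ((ℤ × ℤ) × LetterAB C),
      l.Chain' (fun c c' => ((sigmaAB T a b).ruleVec c c').isSome) →
      (∀ x ∈ l, x ∈ P) → ∀ x y, l.head? = some x → l.getLast? = some y →
      Nonempty ((GP T a b P).Walk x y) := by
  intro l
  induction l with
  | nil => intro _ _ x y h; simp at h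
  | cons z l ih =>
    intro hch hmem x y hh hl
    have hx : z = x := by simpa using hh
    match l with
    | [] =>
      have hzy : z = y := by simpa using hl
      exact hx ▸ hzy ▸ ⟨SimpleGraph.Walk.nil⟩
    | w :: l' =>
      rw [List.Chain', List.isChain_cons_cons] at hch
      have hne : z ≠ w := by
        rintro rfl
        exact ruleVec_self_not_isSome T a b z hch.1
      have hadj : (GP T a b P).Adj z w :=
        ⟨hne, hmem z (by simp), hmem w (by simp), hch.1⟩
      obtain ⟨wk⟩ := ih hch.2 (fun c hc => hmem c (List.mem_cons_of_mem _ hc)) w y rfl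
        (by simpa using hl)
      exact hx ▸ ⟨SimpleGraph.Walk.cons hadj wk⟩

lemma walk_support_getLast? {α : Type*} {G : SimpleGraph α} :
    ∀ {u v : α} (p : G.Walk u v), p.support.getLast? = some v := by
  intro u v p
  induction p with
  | nil => rfl
  | @cons u w v h p ih =>
    rw [SimpleGraph.Walk.support_cons]
    rw [p.support_eq_cons] at ih ⊢
    rw [List.getLast?_cons_cons]
    exact ih

lemma isPathOf_reverse {A V : Type*} [AddCommGroup V] (σ : Subst A V)
    (P : Finset (V × A)) (γ : List (V × A)) (h : σ.IsPathOf P γ) :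
    σ.IsPathOf P γ.reverse := by
  obtain ⟨⟨hne, hch, hinj⟩, hmem⟩ := h
  refine ⟨⟨by simpa using hne, ?_, ?_⟩, ?_⟩
  · rw [List.Chain', List.isChain_reverse]
    exact hch.imp (fun a b hab => ruleVec_symm_isSome σ hab)
  · intro c hc c' hc'
    exact hinj c (by simpa using hc) c' (by simpa using hc')
  · intro c hc
    exact hmem c (by simpa using hc)

lemma head?_exists {α : Type*} {l : List α} {x : α} (h : l.head? = some x) :
    ∃ t, l = x :: t := by
  cases l with
  | nil => simp at h
  | cons a t => simp at h; exact ⟨t, by rw [h]⟩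

lemma gfun_eq_cases {P : Finset ((ℤ × ℤ) × LetterAB C)} (hpat : IsPattern P)
    {c c' : (ℤ × ℤ) × LetterAB C} (hc : c ∈ P) (hc' : c' ∈ P) (hne : c ≠ c')
    (hg : gfun c = gfun c') :
    (c.2 = LetterAB.a0 ∧ c'.2 = LetterAB.b0 ∧ c'.1 = c.1 + ((1 : ℤ), (0 : ℤ))) ∨
    (c.2 = LetterAB.b0 ∧ c'.2 = LetterAB.a0 ∧ c.1 = c'.1 + ((1 : ℤ), (0 : ℤ))) := by
  have hpos : c.1 = c'.1 → c = c' := fun h => hpat c hc c' hc' h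
  have h1 : (gfun c).1 = (gfun c').1 := congrArg Prod.fst hg
  have h2 : (gfun c).2 = (gfun c').2 := congrArg Prod.snd hg
  simp only [gfun] at h1 h2
  cases hct : c.2 <;> cases hdt : c'.2 <;> rw [hct, hdt] at h1 <;>
    simp only [sfun] at h1 <;>
    first
    | (exfalso; omega)
    | (exfalso
       exact hne (hpos (Prod.ext_iff.mpr ⟨by omega, h2⟩)))
    | (exact Or.inl ⟨rfl, rfl, Prod.ext_iff.mpr ⟨by simp; omega, by simp; omega⟩⟩)
    | (exact Or.inr ⟨rfl, rfl, Prod.ext_iff.mpr ⟨by simp; omega, by simp; omega⟩⟩)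

lemma no_direct {ca cb : (ℤ × ℤ) × LetterAB C} (hca : ca.2 = LetterAB.a0)
    (hcb : cb.2 = LetterAB.b0) (hpos : cb.1 = ca.1 + ((1 : ℤ), (0 : ℤ))) :
    ¬ ((sigmaAB T a b).ruleVec ca cb).isSome := by
  rw [ruleVec_isSome_iff]
  unfold HM VM
  rw [hca, hcb, hpos]
  have h1 : ca.1 + ((1 : ℤ), (0 : ℤ)) - ca.1 = ((1 : ℤ), (0 : ℤ)) := by ring
  have h2 : ca.1 - (ca.1 + ((1 : ℤ), (0 : ℤ))) = ((-1 : ℤ), (0 : ℤ)) := by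
    rw [Prod.ext_iff]
    constructor <;> simp
  rw [h1, h2]
  simp [Prod.ext_iff]

lemma toTile_mem {t : LetterAB C} (ht : LetterAB.inA T t) :
    LetterAB.toTile a b t ∈ T → True := fun _ => trivial

lemma cycle_of_walk (ha : a ∈ T) (hb : b ∈ T) (hab : a.east = b.west)
    {P : Finset ((ℤ × ℤ) × LetterAB C)} (hpat : IsPattern P)
    {ca cb : (ℤ × ℤ) × LetterAB C} (hca : ca.2 = LetterAB.a0)
    (hcb : cb.2 = LetterAB.b0) (hpos : cb.1 = ca.1 + ((1 : ℤ), (0 : ℤ)))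
    (hw : Nonempty ((GP T a b P).Walk ca cb)) : AdmitsCycleWith T a b := by
  classical
  obtain ⟨w0⟩ := hw
  set γ' := (w0.toPath : (GP T a b P).Walk ca cb).support with hg'
  have hnodup : γ'.Nodup := w0.toPath.2.support_nodup
  have hchain : γ'.Chain' (GP T a b P).Adj :=
    SimpleGraph.Walk.isChain_adj_support _
  have hhead : γ'.head? = some ca := by
    rw [hg', SimpleGraph.Walk.support_eq_cons]; rfl
  have hlast : γ'.getLast? = some cb := walk_support_getLast? _
  have hcacb : ca ≠ cb := by
    intro h; rw [h, hcb] at hca; exact absurd hca (by simp)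
  have hm0 : γ' ≠ [] := by intro h; rw [h] at hhead; simp at hhead
  have hm1 : 1 ≤ γ'.length := List.length_pos_iff.mpr hm0
  have hpos1 : cb.1.1 = ca.1.1 + 1 := by
    have := congrArg Prod.fst hpos; simpa using this
  have hpos2 : cb.1.2 = ca.1.2 := by
    have := congrArg Prod.snd hpos; simpa using this
  have hne1 : γ'.length ≠ 1 := by
    intro h
    obtain ⟨x, hx⟩ := List.length_eq_one_iff.mp h
    rw [hx] at hhead hlast
    simp only [List.head?_cons, List.getLast?_singleton, Option.some.injEq] at hhead hlast
    exact hcacb (by rw [← hhead, hlast])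
  have hne2 : γ'.length ≠ 2 := by
    intro h
    obtain ⟨x, y, hx⟩ := List.length_eq_two.mp h
    rw [hx] at hhead hlast hchain
    simp only [List.head?_cons, Option.some.injEq] at hhead
    have hy : y = cb := by simpa using hlast
    rw [List.Chain', List.isChain_cons_cons] at hchain
    subst hhead; subst hy
    exact no_direct T a b hca hcb hpos hchain.1.2.2.2
  have hne3 : γ'.length ≠ 3 := by
    intro h
    obtain ⟨x, y, z, hx⟩ := List.length_eq_three.mp h
    rw [hx] at hhead hlast hchain
    simp only [List.head?_cons, Option.some.injEq] at hhead
    have hz : z = cb := by simpa using hlast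
    rw [List.Chain', List.isChain_cons_cons, List.isChain_cons_cons] at hchain
    subst hhead; subst hz
    have s1 := step_of_isSome T a b hchain.1.2.2.2
    have s2 := step_of_isSome T a b hchain.2.1.2.2.2
    have e1 (u v : (ℤ × ℤ) × LetterAB C) (w1 w2 : ℤ) :
        v.1 - u.1 = (w1, w2) → v.1.1 - u.1.1 = w1 ∧ v.1.2 - u.1.2 = w2 := by
      intro hh
      exact ⟨by have := congrArg Prod.fst hh; simpa using this,
             by have := congrArg Prod.snd hh; simpa using this⟩
    rcases s1 with h1 | h1 | h1 | h1 <;> rcases s2 with h2 | h2 | h2 | h2 <;>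
      obtain ⟨e11, e12⟩ := e1 _ _ _ _ h1 <;> obtain ⟨e21, e22⟩ := e1 _ _ _ _ h2 <;>
      omega
  have hm4 : 4 ≤ γ'.length := by omega
  have hQ : ∀ x ∈ γ', x ∈ P ∧ LetterAB.inA T x.2 :=
    all_of_chain'
      (fun x y hxy =>
        ⟨⟨hxy.2.1, (inA_of_isSome T a b hxy.2.2.2).1⟩,
         ⟨hxy.2.2.1, (inA_of_isSome T a b hxy.2.2.2).2⟩⟩) γ' hchain (by omega)
  have htoT : ∀ t : LetterAB C, LetterAB.inA T t → LetterAB.toTile a b t ∈ T := by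
    intro t ht
    cases t with
    | tile t => exact ht
    | a0 => exact ha
    | b0 => exact hb
  set L := γ'.reverse ++ [cb] with hLdef
  have hLlen : L.length = γ'.length + 1 := by simp [hLdef]
  have hchainR : L.Chain' (fun x y =>
      WangMatch (LetterAB.toTile a b x.2) (LetterAB.toTile a b y.2) (y.1 - x.1)) := by
    rw [hLdef, List.Chain', List.isChain_append]
    refine ⟨?_, List.isChain_singleton _, ?_⟩
    · rw [List.isChain_reverse]
      exact hchain.imp fun x y hxy =>
        wang_of_isSome T a b (ruleVec_symm_isSome _ hxy.2.2.2)
    · intro x hx y hy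
      rw [List.getLast?_reverse, hhead] at hx
      simp only [List.head?_cons, Option.mem_def, Option.some.injEq] at hx hy
      subst hx; subst hy
      rw [hca, hcb]
      have hd : cb.1 - ca.1 = ((1 : ℤ), (0 : ℤ)) := by
        rw [Prod.ext_iff]; constructor <;> simp [hpos1, hpos2]
      rw [hd]
      exact Or.inl ⟨rfl, hab⟩
  obtain ⟨tl2, htl2⟩ := head?_exists hhead
  have hrevlast : γ'.reverse.head? = some cb := by
    rw [List.head?_reverse]; exact hlast
  obtain ⟨tl3, htl3⟩ := head?_exists hrevlast
  have hrevlen : γ'.reverse.length = γ'.length := by simp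
  have hgetrev : ∀ j, j < γ'.length → L.getD j cb = γ'.reverse.getD j cb := by
    intro j hj
    rw [hLdef]
    exact List.getD_append _ _ _ j (by rwa [hrevlen])
  have hrevD : ∀ j (hj : j < γ'.length),
      γ'.reverse.getD j cb = γ'.reverse[j]'(by rwa [hrevlen]) :=
    fun j hj => List.getD_eq_getElem _ _ _
  have hget0 : L.getD 0 cb = cb := by
    rw [hgetrev 0 (by omega), htl3]
    rfl
  have hgetm : L.getD γ'.length cb = cb := by
    rw [hLdef, List.getD_append_right _ _ _ _ (by rw [hrevlen])]
    rw [hrevlen, Nat.sub_self]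
    rfl
  have hgetm1 : L.getD (γ'.length - 1) cb = ca := by
    rw [hgetrev _ (by omega), htl2, List.reverse_cons]
    have hlen2 : (ca :: tl2).length - 1 = tl2.reverse.length := by simp
    rw [hlen2, List.getD_append_right _ _ _ _ le_rfl, Nat.sub_self]
    rfl
  refine ⟨γ'.length + 1,
      fun j => LetterAB.toTile a b (L.getD j cb).2,
      fun j => (L.getD j cb).1,
      by omega, ?_, ?_, ?_, ?_, ?_, ?_⟩
  · -- tiles in T
    intro j hj
    show LetterAB.toTile a b (L.getD j cb).2 ∈ T
    rcases Nat.lt_or_ge j γ'.length with hj' | hj'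
    · rw [hgetrev j hj', hrevD j hj']
      exact htoT _ (hQ _ (List.mem_reverse.mp (List.getElem_mem _))).2
    · have hje : j = γ'.length := by omega
      rw [hje, hgetm, hcb]
      exact hb
  · -- injectivity of positions
    intro j hj j' hj' hpp
    simp only [Nat.add_sub_cancel] at hj hj'
    have hpp' : (L.getD j cb).1 = (L.getD j' cb).1 := hpp
    clear hpp
    rename' hpp' => hpp
    rw [hgetrev j hj, hrevD j hj, hgetrev j' hj', hrevD j' hj'] at hpp
    have hcell : γ'.reverse[j]'(by omega) = γ'.reverse[j']'(by omega) := by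
      apply hpat
      · exact (hQ _ (List.mem_reverse.mp (List.getElem_mem _))).1
      · exact (hQ _ (List.mem_reverse.mp (List.getElem_mem _))).1
      · exact hpp
    exact (List.Nodup.getElem_inj_iff (List.nodup_reverse.mpr hnodup)).mp hcell
  · -- p (n-1) = p 0
    show (L.getD (γ'.length + 1 - 1) cb).1 = (L.getD 0 cb).1
    rw [Nat.add_sub_cancel, hgetm, hget0]
  · -- t (n-1) = t 0
    show LetterAB.toTile a b (L.getD (γ'.length + 1 - 1) cb).2 =
      LetterAB.toTile a b (L.getD 0 cb).2
    rw [Nat.add_sub_cancel, hgetm, hget0]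
  · -- matches
    intro j hj
    simp only [Nat.add_sub_cancel] at hj
    show WangMatch (LetterAB.toTile a b (L.getD j cb).2)
      (LetterAB.toTile a b (L.getD (j + 1) cb).2)
      ((L.getD (j + 1) cb).1 - (L.getD j cb).1)
    have hjL : j < L.length := by omega
    have hj1L : j + 1 < L.length := by omega
    have hiff := List.isChain_iff_getElem.mp hchainR j (by omega)
    have e1 : L.getD j cb = L[j]'hjL := List.getD_eq_getElem _ _ _
    have e2 : L.getD (j + 1) cb = L[j + 1]'hj1L := List.getD_eq_getElem _ _ _
    rw [e1, e2]
    exact hiff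
  · -- the a-b adjacency
    refine ⟨γ'.length - 1, by omega, ?_, ?_, ?_⟩
    · show LetterAB.toTile a b (L.getD (γ'.length - 1) cb).2 = a
      rw [hgetm1, hca]
      rfl
    · show LetterAB.toTile a b (L.getD (γ'.length - 1 + 1) cb).2 = b
      have h9 : γ'.length - 1 + 1 = γ'.length := by omega
      rw [h9, hgetm, hcb]
      rfl
    · show (L.getD (γ'.length - 1 + 1) cb).1 = (L.getD (γ'.length - 1) cb).1 + ((1:ℤ), (0:ℤ))
      have h9 : γ'.length - 1 + 1 = γ'.length := by omega
      rw [h9, hgetm, hgetm1]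
      exact hpos

lemma overlap_to_cycle (ha : a ∈ T) (hb : b ∈ T) (hab : a.east = b.west)
    (h : ¬ (sigmaAB T a b).NonOverlapping) : AdmitsCycleWith T a b := by
  unfold Subst.NonOverlapping Subst.NonOverlappingOn at h
  push_neg at h
  obtain ⟨P, hpat, hcov, c, hc, c', hc', hne, γ, hpath, hh, hl, bb, hbb, hov⟩ := h
  rw [supp_eq] at hbb hov
  have hbb0 : bb = ((0 : ℤ), (0 : ℤ)) := Finset.mem_singleton.mp hbb
  have homega : (sigmaAB T a b).omega γ = 0 := by
    have h5 := Finset.mem_singleton.mp hov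
    rw [hbb0] at h5
    have h6 : ((0 : ℤ), (0 : ℤ)) = (0 : ℤ × ℤ) := rfl
    rw [h6, add_zero] at h5
    exact h5
  have hgf : gfun c = gfun c' := by
    have h2 := omega_telescope T a b γ c c' hpath.1.2.1 hh hl
    rw [homega] at h2
    exact (sub_eq_zero.mp h2.symm).symm
  have hwalk : Nonempty ((GP T a b P).Walk c c') :=
    walk_of_chain T a b P γ hpath.1.2.1 hpath.2 c c' hh hl
  rcases gfun_eq_cases hpat hc hc' hne hgf with ⟨h1, h2, h3⟩ | ⟨h1, h2, h3⟩
  · exact cycle_of_walk T a b ha hb hab hpat h1 h2 h3 hwalk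
  · exact cycle_of_walk T a b ha hb hab hpat h2 h1 h3
      ⟨(Classical.choice hwalk).reverse⟩

lemma chain'_map_range' {α : Type*} (f : ℕ → α) (R : α → α → Prop) :
    ∀ (len s : ℕ), (∀ q, s ≤ q → q + 1 < s + len → R (f q) (f (q + 1))) →
      List.Chain' R ((List.range' s len).map f) := by
  intro len
  induction len with
  | zero => intro s _; exact List.isChain_nil
  | succ len ih =>
    intro s hcond
    rw [List.range'_succ, List.map_cons, List.Chain', List.isChain_cons]
    constructor
    · intro y hy
      cases len with
      | zero => simp at hy
      | succ len' =>
        rw [List.range'_succ, List.map_cons, List.head?_cons] at hy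
        have hyy : y = f (s + 1) := by simpa using hy.symm
        rw [hyy]
        exact hcond s le_rfl (by omega)
    · exact ih (s + 1) (fun q hq hq2 => hcond q (by omega) (by omega))

lemma map_range'_head? {α : Type*} (f : ℕ → α) (s len : ℕ) :
    ((List.range' s (len + 1)).map f).head? = some (f s) := by
  rw [List.range'_succ, List.map_cons, List.head?_cons]

lemma map_range'_getLast? {α : Type*} (f : ℕ → α) (s len : ℕ) :
    ((List.range' s (len + 1)).map f).getLast? = some (f (s + len)) := by
  rw [List.range'_concat, List.map_append]
  simp

/-- arithmetic helper: if `i + 1 ≤ k ≤ i + m - 1` then `k % m ≠ i` -/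
lemma mod_ne_helper {m i k : ℕ} (hi : i < m) (h1 : i + 1 ≤ k) (h2 : k ≤ i + m - 1) :
    k % m ≠ i := by
  intro hk
  have hd := Nat.div_add_mod k m
  rw [hk] at hd
  rcases Nat.eq_zero_or_pos (k / m) with hq | hq
  · rw [hq, Nat.mul_zero] at hd; omega
  · have := Nat.le_mul_of_pos_right m hq
    omega

lemma succ_mod_ne_self {m i : ℕ} (hm : 2 ≤ m) (hi : i < m) : (i + 1) % m ≠ i := by
  rcases Nat.lt_or_ge (i + 1) m with h | h
  · rw [Nat.mod_eq_of_lt h]; omega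
  · have : i + 1 = m := by omega
    rw [this, Nat.mod_self]; omega

lemma succ_succ_mod_ne {m i : ℕ} (hm : 3 ≤ m) (hi : i < m) : ((i + 1) % m + 1) % m ≠ i := by
  rcases Nat.lt_or_ge (i + 1) m with h | h
  · rw [Nat.mod_eq_of_lt h]
    rcases Nat.lt_or_ge (i + 2) m with h' | h'
    · rw [Nat.mod_eq_of_lt h']; omega
    · have h'' : i + 2 = m := by omega
      rw [h'', Nat.mod_self]; omega
  · have h' : i + 1 = m := by omega
    rw [h', Nat.mod_self]
    rw [Nat.mod_eq_of_lt (by omega)]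
    omega

/-- the letters around the cycle -/
def cycL (t : ℕ → WangTile C) (i m : ℕ) : ℕ → LetterAB C := fun j =>
  if j % m = i then LetterAB.a0
  else if j % m = (i + 1) % m then LetterAB.b0
  else LetterAB.tile (t (j % m))

/-- the cells around the cycle -/
def cycC (t : ℕ → WangTile C) (p : ℕ → ℤ × ℤ) (i m : ℕ) :
    ℕ → (ℤ × ℤ) × LetterAB C := fun j => (p (j % m), cycL t i m j)

lemma cycC_mod (t : ℕ → WangTile C) (p : ℕ → ℤ × ℤ) (i m : ℕ) {j j' : ℕ}
    (h : j % m = j' % m) : cycC t p i m j = cycC t p i m j' := by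
  simp only [cycC, cycL, h]

lemma cycL_eq_a0_iff {t : ℕ → WangTile C} {i m j : ℕ} :
    cycL t i m j = LetterAB.a0 ↔ j % m = i := by
  unfold cycL
  split_ifs with h1 h2
  · simp [h1]
  · simp [h1]
  · simp [h1]

lemma cycL_eq_b0_iff {t : ℕ → WangTile C} {i m j : ℕ} (hm : 2 ≤ m) (hi : i < m) :
    cycL t i m j = LetterAB.b0 ↔ j % m = (i + 1) % m := by
  unfold cycL
  split_ifs with h1 h2
  · simp only [h1]
    constructor
    · intro h; simp at h
    · intro h; exact absurd h.symm (succ_mod_ne_self hm hi)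
  · simp [h2]
  · simp [h2]

lemma cycle_to_overlap (hcyc : AdmitsCycleWith T a b) :
    ¬ (sigmaAB T a b).NonOverlapping := by
  obtain ⟨n, t, p, hn5, htT, hinj, hp0, ht0, hmatch, i, hi, hta, htb, hpab⟩ := hcyc
  set m := n - 1 with hm
  have hm4 : 4 ≤ m := by omega
  have hmpos : 0 < m := by omega
  have him : i < m := hi
  have hmod : ∀ j : ℕ, j % m < m := fun j => Nat.mod_lt j hmpos
  have hsuccmod : ∀ j : ℕ, (j + 1) % m = (j % m + 1) % m := by
    intro j
    conv_lhs => rw [Nat.add_mod]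
    rw [Nat.mod_eq_of_lt (show 1 < m by omega)]
  have hmatch' : ∀ r, r < m → WangMatch (t r) (t ((r + 1) % m)) (p ((r + 1) % m) - p r) := by
    intro r hr
    rcases Nat.lt_or_ge (r + 1) m with h | h
    · rw [Nat.mod_eq_of_lt h]; exact hmatch r (by omega)
    · have he : r + 1 = m := by omega
      have h0 : (r + 1) % m = 0 := by rw [he, Nat.mod_self]
      rw [h0]
      have hthis := hmatch r (by omega)
      rw [he, ht0, hp0] at hthis
      exact hthis
  have htb' : t ((i + 1) % m) = b := by
    rcases Nat.lt_or_ge (i + 1) m with h | h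
    · rwa [Nat.mod_eq_of_lt h]
    · have he : i + 1 = m := by omega
      rw [he, Nat.mod_self, ← ht0, ← he]
      exact htb
  have httile : ∀ j : ℕ, LetterAB.toTile a b (cycL t i m j) = t (j % m) := by
    intro j
    unfold cycL
    split_ifs with h1 h2
    · rw [h1, hta]; rfl
    · rw [h2, htb']; rfl
    · rfl
  have hinA : ∀ j : ℕ, LetterAB.inA T (cycL t i m j) := by
    intro j
    unfold cycL
    split_ifs with h1 h2
    · trivial
    · trivial
    · exact htT (j % m) (by have := hmod j; omega)
  set P := (Finset.range m).image (cycC t p i m) with hP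
  have hceq : ∀ j j', j % m = j' % m → cycC t p i m j = cycC t p i m j' :=
    fun j j' h => cycC_mod t p i m h
  have hcmem : ∀ j : ℕ, cycC t p i m j ∈ P := by
    intro j
    rw [hP]
    refine Finset.mem_image.mpr ⟨j % m, Finset.mem_range.mpr (hmod j), ?_⟩
    exact hceq (j % m) j (Nat.mod_eq_of_lt (hmod j))
  have hpat : IsPattern P := by
    intro x hx y hy hxy
    rw [hP] at hx hy
    obtain ⟨r, hr, rfl⟩ := Finset.mem_image.mp hx
    obtain ⟨r', hr', rfl⟩ := Finset.mem_image.mp hy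
    rw [Finset.mem_range] at hr hr'
    have hxy' : p (r % m) = p (r' % m) := hxy
    rw [Nat.mod_eq_of_lt hr, Nat.mod_eq_of_lt hr'] at hxy'
    rw [hinj r hr r' hr' hxy']
  have hstep : ∀ j : ℕ, j % m ≠ i →
      ((sigmaAB T a b).ruleVec (cycC t p i m j) (cycC t p i m (j + 1))).isSome := by
    intro j hj
    rw [ruleVec_isSome_iff]
    have hw := hmatch' (j % m) (hmod j)
    have hΔ : (cycC t p i m (j + 1)).1 - (cycC t p i m j).1 =
        p ((j % m + 1) % m) - p (j % m) := by
      simp only [cycC]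
      rw [hsuccmod j]
    have hA : (cycC t p i m j).2 ≠ LetterAB.a0 := by
      intro h
      exact hj (cycL_eq_a0_iff.mp h)
    have hB : ¬ ((cycC t p i m (j + 1)).2 = LetterAB.a0 ∧
        (cycC t p i m j).2 = LetterAB.b0) := by
      rintro ⟨h1, h2⟩
      have e1 := cycL_eq_a0_iff.mp h1
      have e2 := (cycL_eq_b0_iff (by omega) him).mp h2
      rw [hsuccmod j, e2] at e1
      exact succ_succ_mod_ne (by omega) him e1
    have ht1 : LetterAB.toTile a b (cycC t p i m j).2 = t (j % m) := httile j
    have ht2 : LetterAB.toTile a b (cycC t p i m (j + 1)).2 = t ((j % m + 1) % m) := by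
      have := httile (j + 1)
      rw [hsuccmod j] at this
      exact this
    unfold WangMatch at hw
    rcases hw with ⟨h4, h5⟩ | ⟨h4, h5⟩ | ⟨h4, h5⟩ | ⟨h4, h5⟩
    · refine Or.inl ⟨hΔ.trans h4, hinA j, hinA (j + 1), ?_, fun hcon => hA hcon.1⟩
      rw [ht1, ht2]; exact h5
    · refine Or.inr (Or.inr (Or.inl ⟨?_, hinA (j + 1), hinA j, ?_, hB⟩))
      · have : (cycC t p i m j).1 - (cycC t p i m (j + 1)).1 =
            -((cycC t p i m (j + 1)).1 - (cycC t p i m j).1) := by ring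
        rw [this, hΔ.trans h4]
        decide
      · rw [ht1, ht2]; exact h5.symm
    · refine Or.inr (Or.inl ⟨hΔ.trans h4, hinA j, hinA (j + 1), ?_⟩)
      rw [ht1, ht2]; exact h5
    · refine Or.inr (Or.inr (Or.inr ⟨?_, hinA (j + 1), hinA j, ?_⟩))
      · have : (cycC t p i m j).1 - (cycC t p i m (j + 1)).1 =
            -((cycC t p i m (j + 1)).1 - (cycC t p i m j).1) := by ring
        rw [this, hΔ.trans h4]
        decide
      · rw [ht1, ht2]; exact h5.symm
  have hseg : ∀ j k : ℕ, i + 1 ≤ j → j ≤ k → k ≤ i + m →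
      (sigmaAB T a b).IsPathOf P ((List.range' j (k - j + 1)).map (cycC t p i m)) ∧
      ((List.range' j (k - j + 1)).map (cycC t p i m)).head? = some (cycC t p i m j) ∧
      ((List.range' j (k - j + 1)).map (cycC t p i m)).getLast? =
        some (cycC t p i m k) := by
    intro j k h1 h2 h3
    refine ⟨⟨⟨?_, ?_, ?_⟩, ?_⟩, ?_, ?_⟩
    · intro hnil
      have := congrArg List.length hnil
      simp at this
    · apply chain'_map_range'
      intro q hq hq2
      exact hstep q (mod_ne_helper him (by omega) (by omega))
    · intro x hx y hy hxy
      obtain ⟨q, _, rfl⟩ := List.mem_map.mp hx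
      obtain ⟨q', _, rfl⟩ := List.mem_map.mp hy
      exact hpat _ (hcmem q) _ (hcmem q') hxy
    · intro x hx
      obtain ⟨q, _, rfl⟩ := List.mem_map.mp hx
      exact hcmem q
    · exact map_range'_head? _ _ _
    · rw [map_range'_getLast? _ _ _, Nat.add_sub_cancel' h2]
  have hcov : (sigmaAB T a b).Covered P := by
    intro x hx y hy
    rw [hP] at hx hy
    obtain ⟨r, hr, rfl⟩ := Finset.mem_image.mp hx
    obtain ⟨r', hr', rfl⟩ := Finset.mem_image.mp hy
    rw [Finset.mem_range] at hr hr'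
    have hidx : ∀ r'', r'' < m → ∃ j, i + 1 ≤ j ∧ j ≤ i + m ∧ j % m = r'' := by
      intro r'' hr''
      rcases Nat.lt_or_ge i r'' with h | h
      · exact ⟨r'', by omega, by omega, Nat.mod_eq_of_lt hr''⟩
      · refine ⟨r'' + m, by omega, by omega, ?_⟩
        rw [Nat.add_mod_right]
        exact Nat.mod_eq_of_lt hr''
    obtain ⟨jx, hjx1, hjx2, hjx3⟩ := hidx r hr
    obtain ⟨jy, hjy1, hjy2, hjy3⟩ := hidx r' hr'
    have hex : cycC t p i m jx = cycC t p i m r := by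
      apply hceq
      rw [hjx3, Nat.mod_eq_of_lt hr]
    have hey : cycC t p i m jy = cycC t p i m r' := by
      apply hceq
      rw [hjy3, Nat.mod_eq_of_lt hr']
    rcases le_or_gt jx jy with h | h
    · obtain ⟨hpth, hh, hl⟩ := hseg jx jy hjx1 h hjy2
      refine ⟨_, hpth, ?_, ?_⟩
      · rw [hh, hex]
      · rw [hl, hey]
    · obtain ⟨hpth, hh, hl⟩ := hseg jy jx hjy1 (le_of_lt h) hjx2
      refine ⟨_, isPathOf_reverse _ _ _ hpth, ?_, ?_⟩
      · rw [List.head?_reverse, hl, hex]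
      · rw [List.getLast?_reverse, hh, hey]
  intro hno
  have hnoP := hno P hpat hcov
  obtain ⟨hpth, hh, hl⟩ := hseg (i + 1) (i + m) le_rfl (by omega) le_rfl
  have hca : cycC t p i m (i + m) = cycC t p i m i := by
    apply hceq
    rw [Nat.add_mod_right]
  rw [hca] at hl
  have hci2 : (cycC t p i m i).2 = LetterAB.a0 :=
    cycL_eq_a0_iff.mpr (Nat.mod_eq_of_lt him)
  have hci12 : (cycC t p i m (i + 1)).2 = LetterAB.b0 :=
    (cycL_eq_b0_iff (by omega) him).mpr rfl
  have hnecc : cycC t p i m (i + 1) ≠ cycC t p i m i := by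
    intro h
    have := congrArg Prod.snd h
    rw [hci12, hci2] at this
    simp at this
  have hpp : p ((i + 1) % m) = p (i % m) + ((1 : ℤ), (0 : ℤ)) := by
    rw [Nat.mod_eq_of_lt him]
    rcases Nat.lt_or_ge (i + 1) m with h | h
    · rw [Nat.mod_eq_of_lt h]; exact hpab
    · have he : i + 1 = m := by omega
      rw [he, Nat.mod_self, ← hp0, ← he]
      exact hpab
  have hω : (sigmaAB T a b).omega
      ((List.range' (i + 1) (i + m - (i + 1) + 1)).map (cycC t p i m)) = 0 := by
    rw [omega_telescope T a b _ _ _ hpth.1.2.1 hh hl]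
    have hg1 : gfun (cycC t p i m i) =
        (2 * (p (i % m)).1 + 1, (p (i % m)).2) := by
      unfold gfun
      rw [hci2]
      rfl
    have hg2 : gfun (cycC t p i m (i + 1)) =
        (2 * (p ((i + 1) % m)).1 + (-1), (p ((i + 1) % m)).2) := by
      unfold gfun
      rw [hci12]
      rfl
    rw [hg1, hg2, hpp]
    have e1 : (p (i % m) + ((1 : ℤ), (0 : ℤ))).1 = (p (i % m)).1 + 1 := by simp
    have e2 : (p (i % m) + ((1 : ℤ), (0 : ℤ))).2 = (p (i % m)).2 := by simp
    rw [e1, e2, Prod.mk_sub_mk]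
    rw [Prod.ext_iff]
    constructor <;> simp <;> ring
  have happly := hnoP (cycC t p i m (i + 1)) (hcmem (i + 1)) (cycC t p i m i)
    (hcmem i) hnecc _ hpth hh hl ((0 : ℤ), (0 : ℤ))
    (by rw [supp_eq]; exact Finset.mem_singleton.mpr rfl)
  apply happly
  rw [supp_eq, hω]
  exact Finset.mem_singleton.mpr rfl
end Exp

/-- Theorem `undnono`, reduction.  Let `a, b ∈ T` be
horizontally matching Wang tiles.  The substitution `σ_{a,b}` is overlapping
if and only if `T` admits a valid tiling of a cycle in which a copy of `b`
sits immediately to the right of a copy of `a`. -/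
theorem sigmaAB_overlapping_iff {C : Type*} (T : Finset (WangTile C))
    (a b : WangTile C) (ha : a ∈ T) (hb : b ∈ T) (hab : a.east = b.west) :
    ¬ (sigmaAB T a b).NonOverlapping ↔ AdmitsCycleWith T a b := by
  constructor
  · exact overlap_to_cycle T a b ha hb hab
  · exact fun hcyc => cycle_to_overlap T a b hcyc
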